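/- arXiv:2104.04709 — 8 statements merged into one kernel-verified Lean document; each statement's English description precedes it below -/
import Mathlib

section
/- Let l ≥ 1 be a natural number, L = 2^l, and let r₀, r₁ be natural numbers with r₀ < L and r₁ < L. Let m₀ = MSB(r₀), m₁ = MSB(r₁) (the bits of r₀ and r₁ at position l−1), and let m⁰, m¹ be any Booleans whose XOR equals MSB((r₀ + r₁) mod L). Then wrap(r₀, r₁, L) = 1 if and only if (m₀ ∧ m⁰ ∧ m¹) ∨ (m₁ ∧ m⁰ ∧ m¹) ∨ (m₀ ∧ ¬m⁰ ∧ ¬m¹) ∨ (m₁ ∧ ¬m⁰ ∧ ¬m¹) ∨ (m₀ ∧ m₁). -/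
/-- `wrap a₀ a₁ L = 1` if `a₀ + a₁ ≥ L` and `0` otherwise. -/
def wrap (a₀ a₁ L : ℕ) : ℕ := if L ≤ a₀ + a₁ then 1 else 0

lemma testBit_eq_decide (k x : ℕ) (hx : x < 2 ^ (k + 1)) :
    x.testBit k = decide (2 ^ k ≤ x) := by
  rw [Nat.testBit_eq_decide_div_mod_eq]
  rcases Nat.lt_or_ge x (2 ^ k) with h | h
  · rw [Nat.div_eq_of_lt h]
    simp [Nat.not_le.mpr h]
  · have h2 : x / 2 ^ k = 1 := by
      exact Nat.div_eq_of_lt_le (by omega) (by rw [pow_succ] at hx; omega)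
    rw [h2]
    simp [h]

/-- Correctness of the logical formula of Table 1 / Algorithm 3 (GetWrapped):
whether the two shares `r₀, r₁` of a mask wrap around modulo `L = 2^l`,
expressed in terms of the MSBs `m₀, m₁` of the shares and any Booleans
`m⁰, m¹` whose XOR is the MSB of the reconstructed mask. -/
theorem getWrapped_correct
    (l : ℕ) (hl : 1 ≤ l) (r₀ r₁ : ℕ) (hr₀ : r₀ < 2 ^ l) (hr₁ : r₁ < 2 ^ l)
    (m₀ m₁ : Bool) (hm₀ : m₀ = Nat.testBit r₀ (l - 1)) (hm₁ : m₁ = Nat.testBit r₁ (l - 1))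
    (mup0 mup1 : Bool)
    (hxor : Bool.xor mup0 mup1 = Nat.testBit ((r₀ + r₁) % 2 ^ l) (l - 1)) :
    wrap r₀ r₁ (2 ^ l) = 1 ↔
      ((m₀ && mup0 && mup1) || (m₁ && mup0 && mup1) ||
       (m₀ && !mup0 && !mup1) || (m₁ && !mup0 && !mup1) || (m₀ && m₁)) = true := by
  obtain ⟨k, rfl⟩ : ∃ k, l = k + 1 := ⟨l - 1, by omega⟩
  simp only [Nat.add_sub_cancel] at hm₀ hm₁ hxor
  have hpos : 0 < (2:ℕ) ^ (k + 1) := by positivity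
  have hmod : (r₀ + r₁) % 2 ^ (k + 1) < 2 ^ (k + 1) := Nat.mod_lt _ hpos
  rw [testBit_eq_decide k r₀ hr₀] at hm₀
  rw [testBit_eq_decide k r₁ hr₁] at hm₁
  rw [testBit_eq_decide k _ hmod] at hxor
  have hk : (2:ℕ) ^ (k + 1) = 2 * 2 ^ k := by ring
  subst hm₀ hm₁
  rcases le_or_gt (2 ^ (k + 1)) (r₀ + r₁) with h | h
  · have hm : (r₀ + r₁) % 2 ^ (k + 1) = r₀ + r₁ - 2 ^ (k + 1) := by
      rw [Nat.mod_eq_sub_mod h, Nat.mod_eq_of_lt (by omega)]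
    rw [hm] at hxor
    rw [hk] at h hxor hr₀ hr₁ ⊢
    simp only [wrap, if_pos h]
    cases mup0 <;> cases mup1 <;> simp_all <;> omega
  · have hm : (r₀ + r₁) % 2 ^ (k + 1) = r₀ + r₁ := Nat.mod_eq_of_lt h
    rw [hm] at hxor
    rw [hk] at h hr₀ hr₁ ⊢
    simp only [wrap, if_neg (not_le.mpr h)]
    cases mup0 <;> cases mup1 <;> simp_all <;> omega
end

section
/- Let l ≥ 1 be a natural number, L = 2^l, and let c₀, c₁ be natural numbers with c₀ < L and c₁ < L. Let c = (c₀ + c₁) mod L. Then MSB(c) = MSB(c₀) XOR MSB(c₁) XOR (wrap((2·c₀) mod L, (2·c₁) mod L, L) = 1). -/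
/-- Equation (10) of the paper: the most significant bit of an additively
shared value `c = (c₀ + c₁) mod 2^l` equals the XOR of the MSBs of its two
shares and the wrap of the doubled shares. -/
theorem msb_of_shares
    (l : ℕ) (hl : 1 ≤ l) (c₀ c₁ : ℕ) (hc₀ : c₀ < 2 ^ l) (hc₁ : c₁ < 2 ^ l)
    (c : ℕ) (hc : c = (c₀ + c₁) % 2 ^ l) :
    Nat.testBit c (l - 1) =
      Bool.xor (Nat.testBit c₀ (l - 1))
        (Bool.xor (Nat.testBit c₁ (l - 1))
          (decide (wrap (2 * c₀ % 2 ^ l) (2 * c₁ % 2 ^ l) (2 ^ l) = 1))) := by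
  obtain ⟨k, rfl⟩ : ∃ k, l = k + 1 := ⟨l - 1, by omega⟩
  simp only [Nat.add_sub_cancel]
  set P := 2 ^ k with hP
  have hPpos : 0 < P := Nat.pow_pos (by norm_num)
  have h2 : 2 ^ (k + 1) = 2 * P := by rw [hP, pow_succ]; ring
  subst hc
  set a₀ := c₀ % P with ha₀
  set x₀ := c₀ / P with hx₀
  set a₁ := c₁ % P with ha₁
  set x₁ := c₁ / P with hx₁
  have hd₀ : c₀ = P * x₀ + a₀ := (Nat.div_add_mod c₀ P).symm
  have hd₁ : c₁ = P * x₁ + a₁ := (Nat.div_add_mod c₁ P).symm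
  have haP₀ : a₀ < P := Nat.mod_lt _ hPpos
  have haP₁ : a₁ < P := Nat.mod_lt _ hPpos
  have hx₀le : x₀ ≤ 1 := by
    have : c₀ < 2 * P := by rw [← h2]; exact hc₀
    rw [hx₀]; exact Nat.lt_succ_iff.mp (Nat.div_lt_of_lt_mul (by omega))
  have hx₁le : x₁ ≤ 1 := by
    have : c₁ < 2 * P := by rw [← h2]; exact hc₁
    rw [hx₁]; exact Nat.lt_succ_iff.mp (Nat.div_lt_of_lt_mul (by omega))
  have e0 : 2 * c₀ % 2 ^ (k + 1) = 2 * a₀ := by rw [h2, Nat.mul_mod_mul_left, ha₀]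
  have e1 : 2 * c₁ % 2 ^ (k + 1) = 2 * a₁ := by rw [h2, Nat.mul_mod_mul_left, ha₁]
  rw [e0, e1, h2]
  set carry : ℕ := if P ≤ a₀ + a₁ then 1 else 0 with hcar
  have hwrap : wrap (2 * a₀) (2 * a₁) (2 * P) = carry := by
    unfold wrap
    rw [hcar]
    by_cases h : P ≤ a₀ + a₁
    · rw [if_pos h, if_pos (by omega)]
    · rw [if_neg h, if_neg (by omega)]
  rw [hwrap]
  have hcle : carry ≤ 1 := by rw [hcar]; split <;> omega
  have hsum : c₀ + c₁ = P * (x₀ + x₁ + carry) + (a₀ + a₁ - carry * P) := by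
    rw [hcar]
    by_cases h : P ≤ a₀ + a₁
    · simp only [if_pos h]
      have h1 : P * (x₀ + x₁ + 1) = P * x₀ + P * x₁ + P := by ring
      omega
    · simp only [if_neg h]
      have h1 : P * (x₀ + x₁ + 0) = P * x₀ + P * x₁ := by ring
      omega
  have hrlt : a₀ + a₁ - carry * P < P := by
    rw [hcar]
    by_cases h : P ≤ a₀ + a₁
    · rw [if_pos h]; omega
    · rw [if_neg h]; omega
  set m := (x₀ + x₁ + carry) % 2 with hm
  have hmle : m ≤ 1 := by rw [hm]; omega
  have hsplit : P * (x₀ + x₁ + carry) = 2 * P * ((x₀ + x₁ + carry) / 2) + P * m := by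
    rw [hm]
    conv_lhs => rw [← Nat.div_add_mod (x₀ + x₁ + carry) 2]
    ring
  have hmod : (c₀ + c₁) % (2 * P) = P * m + (a₀ + a₁ - carry * P) := by
    rw [hsum, hsplit, Nat.add_assoc, Nat.mul_add_mod]
    apply Nat.mod_eq_of_lt
    have : P * m ≤ P := by calc P * m ≤ P * 1 := Nat.mul_le_mul_left _ hmle
                                _ = P := Nat.mul_one P
    omega
  have tb : ∀ n : ℕ, Nat.testBit n k = decide (n / P % 2 = 1) := by
    intro n; rw [Nat.testBit_eq_decide_div_mod_eq, hP]
  have div1 : (P * m + (a₀ + a₁ - carry * P)) / P = m := by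
    rw [Nat.mul_add_div hPpos, Nat.div_eq_of_lt hrlt, Nat.add_zero]
  rw [tb, tb, tb, hmod, div1, ← hx₀, ← hx₁]
  rw [hm]
  clear_value carry x₀ x₁ a₀ a₁ P
  interval_cases x₀ <;> interval_cases x₁ <;> interval_cases carry <;> decide
end

section
/- Let l ≥ 1 be a natural number, L = 2^l, and let u₀, u₁, r₀, r₁ be natural numbers, all < L. Define x₀ = (u₀ + r₀) mod L, x₁ = (u₁ + r₁) mod L, x = (x₀ + x₁) mod L, and r = (r₀ + r₁) mod L. Then, as an equality of integers, wrap(u₀, u₁, L) = wrap(u₀, r₀, L) + wrap(u₁, r₁, L) + wrap(x₀, x₁, L) − η − wrap(r₀, r₁, L), where η = 1 if x < r and η = 0 otherwise. -/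
private lemma mod_sum_lt {a b L : ℕ} (ha : a < L) (hb : b < L) :
    (a + b) % L = if L ≤ a + b then a + b - L else a + b := by
  split
  · rw [Nat.mod_eq_sub_mod (by omega), Nat.mod_eq_of_lt (by omega)]
  · exact Nat.mod_eq_of_lt (by omega)

/-- The wrap identity justifying line 9 of Algorithm 5 (Secret Sharing
Comparison): `wrap(u₀,u₁,L) = β₀ + β₁ + δ - η - α` as integers. -/
theorem wrap_identity
    (l : ℕ) (hl : 1 ≤ l) (u₀ u₁ r₀ r₁ : ℕ)
    (hu₀ : u₀ < 2 ^ l) (hu₁ : u₁ < 2 ^ l) (hr₀ : r₀ < 2 ^ l) (hr₁ : r₁ < 2 ^ l)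
    (x₀ x₁ x r : ℕ)
    (hx₀ : x₀ = (u₀ + r₀) % 2 ^ l) (hx₁ : x₁ = (u₁ + r₁) % 2 ^ l)
    (hx : x = (x₀ + x₁) % 2 ^ l) (hr : r = (r₀ + r₁) % 2 ^ l)
    (η : ℤ) (hη : η = if x < r then 1 else 0) :
    (wrap u₀ u₁ (2 ^ l) : ℤ) =
      (wrap u₀ r₀ (2 ^ l) : ℤ) + (wrap u₁ r₁ (2 ^ l) : ℤ) +
        (wrap x₀ x₁ (2 ^ l) : ℤ) - η - (wrap r₀ r₁ (2 ^ l) : ℤ) := by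
  set L := 2 ^ l with hL
  have hx₀' : x₀ < L := hx₀ ▸ Nat.mod_lt _ (by positivity)
  have hx₁' : x₁ < L := hx₁ ▸ Nat.mod_lt _ (by positivity)
  rw [mod_sum_lt hu₀ hr₀] at hx₀
  rw [mod_sum_lt hu₁ hr₁] at hx₁
  rw [mod_sum_lt hx₀' hx₁'] at hx
  rw [mod_sum_lt hr₀ hr₁] at hr
  subst hη
  simp only [wrap]
  split at hx₀ <;> split at hx₁ <;> split at hx <;> split at hr <;>
    split <;> split <;> push_cast <;> omega
end

section
/- Let l ≥ 1 be a natural number, L = 2^l, and let a₀, a₁, r₀, r₁ be natural numbers, all < L. Define a = (a₀ + a₁) mod L, x₀ = ((2a₀ mod L) + r₀) mod L, x₁ = ((2a₁ mod L) + r₁) mod L, x = (x₀ + x₁) mod L, r = (r₀ + r₁) mod L, β₀ = wrap(2a₀ mod L, r₀, L), β₁ = wrap(2a₁ mod L, r₁, L), δ = wrap(x₀, x₁, L), α = wrap(r₀, r₁, L), and η = 1 if x < r, else 0. Then MSB(a) = MSB(a₀) XOR MSB(a₁) XOR ((β₀ + β₁ + δ − η − α) is odd). -/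
private lemma wrap_eq (u v L : ℕ) (_hL : 0 < L) (hu : u < L) (hv : v < L) :
    u + v = (u + v) % L + wrap u v L * L := by
  unfold wrap
  rcases le_or_gt L (u + v) with h | h
  · rw [if_pos h, Nat.mod_eq_sub_mod h, Nat.mod_eq_of_lt (by omega)]; omega
  · rw [if_neg (by omega), Nat.mod_eq_of_lt h]; omega

private lemma msb_eq (l n : ℕ) (hl : 1 ≤ l) (hn : n < 2 ^ l) :
    Nat.testBit n (l - 1) = decide (2 ^ (l - 1) ≤ n) := by
  obtain ⟨k, rfl⟩ : ∃ k, l = k + 1 := ⟨l - 1, by omega⟩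
  simp only [Nat.add_sub_cancel] at *
  rw [Nat.testBit_eq_decide_div_mod_eq]
  rcases le_or_gt (2 ^ k) n with h | h
  · have : n / 2 ^ k = 1 := Nat.div_eq_of_lt_le (by omega) (by rw [pow_succ] at hn; omega)
    simp [this, h]
  · have : n / 2 ^ k = 0 := Nat.div_eq_of_lt h
    simp [this, h, Nat.not_le.mpr h]

private lemma double_mod (l n : ℕ) (hl : 1 ≤ l) (hn : n < 2 ^ l) :
    2 * n = 2 * n % 2 ^ l + (if 2 ^ (l - 1) ≤ n then 1 else 0) * 2 ^ l := by
  have hL : (2:ℕ) ^ l = 2 * 2 ^ (l - 1) := by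
    rw [← pow_succ']; congr 1; omega
  rcases le_or_gt (2 ^ (l - 1)) n with h | h
  · rw [if_pos h, Nat.mod_eq_sub_mod (by omega), Nat.mod_eq_of_lt (by omega)]; omega
  · rw [if_neg (by omega), Nat.mod_eq_of_lt (by omega)]; omega

private lemma key_zero (K L A B : ℤ) (hL : 0 < L) (hA : 0 ≤ A) (hA' : A < L)
    (hB : 0 ≤ B) (hB' : B < L) (h : A - B = K * (-L)) : K = 0 := by
  rcases lt_trichotomy K 0 with hK | hK | hK
  · exfalso; nlinarith
  · exact hK
  · exfalso; nlinarith

set_option maxHeartbeats 1000000 in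
/-- Overall correctness of Algorithm 5 (Secret Sharing Comparison): the most
significant bit of the shared value `a = (a₀ + a₁) mod 2^l` is the XOR of the
MSBs of the shares and the parity of `β₀ + β₁ + δ - η - α`. -/
theorem secret_sharing_comparison_correct
    (l : ℕ) (hl : 1 ≤ l) (a₀ a₁ r₀ r₁ : ℕ)
    (ha₀ : a₀ < 2 ^ l) (ha₁ : a₁ < 2 ^ l) (hr₀ : r₀ < 2 ^ l) (hr₁ : r₁ < 2 ^ l)
    (a x₀ x₁ x r : ℕ)
    (ha : a = (a₀ + a₁) % 2 ^ l)
    (hx₀ : x₀ = (2 * a₀ % 2 ^ l + r₀) % 2 ^ l)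
    (hx₁ : x₁ = (2 * a₁ % 2 ^ l + r₁) % 2 ^ l)
    (hx : x = (x₀ + x₁) % 2 ^ l) (hr : r = (r₀ + r₁) % 2 ^ l)
    (β₀ β₁ δ α η : ℤ)
    (hβ₀ : β₀ = wrap (2 * a₀ % 2 ^ l) r₀ (2 ^ l))
    (hβ₁ : β₁ = wrap (2 * a₁ % 2 ^ l) r₁ (2 ^ l))
    (hδ : δ = wrap x₀ x₁ (2 ^ l)) (hα : α = wrap r₀ r₁ (2 ^ l))
    (hη : η = if x < r then 1 else 0) :
    Nat.testBit a (l - 1) =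
      Bool.xor (Nat.testBit a₀ (l - 1))
        (Bool.xor (Nat.testBit a₁ (l - 1))
          (decide (Odd (β₀ + β₁ + δ - η - α)))) := by
  set L : ℕ := 2 ^ l with hLdef
  have hLpos : 0 < L := Nat.pow_pos (n := l) (by norm_num)
  set M : ℕ := 2 ^ (l - 1) with hMdef
  have hLM : L = 2 * M := by rw [hLdef, hMdef, ← pow_succ']; congr 1; omega
  -- bit values of shares and of a
  set m₀ : ℕ := if M ≤ a₀ then 1 else 0 with hm₀
  set m₁ : ℕ := if M ≤ a₁ then 1 else 0 with hm₁
  have haL : a < L := ha ▸ Nat.mod_lt _ hLpos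
  set m : ℕ := if M ≤ a then 1 else 0 with hm
  -- wrap values as naturals
  set b₀ : ℕ := wrap (2 * a₀ % L) r₀ L with hb₀
  set b₁ : ℕ := wrap (2 * a₁ % L) r₁ L with hb₁
  set d : ℕ := wrap x₀ x₁ L with hd
  set al : ℕ := wrap r₀ r₁ L with hal
  set w : ℕ := wrap a₀ a₁ L with hw
  set e : ℕ := if x < r then 1 else 0 with he
  -- basic equations
  have E1 : 2 * a₀ = 2 * a₀ % L + m₀ * L := double_mod l a₀ hl ha₀
  have E2 : 2 * a₁ = 2 * a₁ % L + m₁ * L := double_mod l a₁ hl ha₁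
  have hy₀lt : 2 * a₀ % L < L := Nat.mod_lt _ hLpos
  have hy₁lt : 2 * a₁ % L < L := Nat.mod_lt _ hLpos
  have E3 : 2 * a₀ % L + r₀ = x₀ + b₀ * L := by
    rw [hx₀]; exact wrap_eq _ _ _ hLpos hy₀lt hr₀
  have E4 : 2 * a₁ % L + r₁ = x₁ + b₁ * L := by
    rw [hx₁]; exact wrap_eq _ _ _ hLpos hy₁lt hr₁
  have hx₀lt : x₀ < L := hx₀ ▸ Nat.mod_lt _ hLpos
  have hx₁lt : x₁ < L := hx₁ ▸ Nat.mod_lt _ hLpos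
  have E5 : x₀ + x₁ = x + d * L := by rw [hx]; exact wrap_eq _ _ _ hLpos hx₀lt hx₁lt
  have E6 : r₀ + r₁ = r + al * L := by rw [hr]; exact wrap_eq _ _ _ hLpos hr₀ hr₁
  have E7 : a₀ + a₁ = a + w * L := by rw [ha]; exact wrap_eq _ _ _ hLpos ha₀ ha₁
  have E8 : 2 * a = 2 * a % L + m * L := double_mod l a hl haL
  have hxlt : x < L := hx ▸ Nat.mod_lt _ hLpos
  have hrlt : r < L := hr ▸ Nat.mod_lt _ hLpos
  have hzlt : 2 * a % L < L := Nat.mod_lt _ hLpos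
  -- the key integer equation
  have hKey : (x : ℤ) - r + e * L - (2 * a % L : ℕ) =
      ((m₀ : ℤ) + m₁ + b₀ + b₁ + d - al - e - 2 * w - m) * (-L) := by
    have c1 : (2 * a₀ : ℤ) = ((2 * a₀ % L : ℕ) : ℤ) + m₀ * L := by exact_mod_cast E1
    have c2 : (2 * a₁ : ℤ) = ((2 * a₁ % L : ℕ) : ℤ) + m₁ * L := by exact_mod_cast E2
    have c3 : ((2 * a₀ % L : ℕ) : ℤ) + r₀ = x₀ + b₀ * L := by exact_mod_cast E3
    have c4 : ((2 * a₁ % L : ℕ) : ℤ) + r₁ = x₁ + b₁ * L := by exact_mod_cast E4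
    have c5 : (x₀ : ℤ) + x₁ = x + d * L := by exact_mod_cast E5
    have c6 : (r₀ : ℤ) + r₁ = r + al * L := by exact_mod_cast E6
    have c7 : (a₀ : ℤ) + a₁ = a + w * L := by exact_mod_cast E7
    have c8 : (2 * a : ℤ) = ((2 * a % L : ℕ) : ℤ) + m * L := by exact_mod_cast E8
    linarith [c1, c2, c3, c4, c5, c6, c7, c8]
  -- K = 0
  have hbound : (0 : ℤ) ≤ (x : ℤ) - r + e * L ∧ (x : ℤ) - r + e * L < L := by
    rcases lt_or_ge x r with h | h
    · rw [he, if_pos h]; push_cast; constructor <;> omega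
    · rw [he, if_neg (by omega)]; push_cast; constructor <;> omega
  have hLZ : (0 : ℤ) < L := by exact_mod_cast hLpos
  have hz : (0:ℤ) ≤ ((2 * a % L : ℕ) : ℤ) := Int.natCast_nonneg _
  have hz2 : ((2 * a % L : ℕ) : ℤ) < L := by exact_mod_cast hzlt
  have hK0 : (m₀ : ℤ) + m₁ + b₀ + b₁ + d - al - e - 2 * w - m = 0 :=
    key_zero _ _ _ _ hLZ hbound.1 hbound.2 hz hz2 hKey
  -- rewrite η and the β's
  have hβsum : β₀ + β₁ + δ - η - α = (m : ℤ) + 2 * w - m₀ - m₁ := by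
    have hηe : η = (e : ℤ) := by rw [hη, he]; split <;> simp
    rw [hβ₀, hβ₁, hδ, hα, hηe]
    linarith [hK0]
  rw [hβsum, msb_eq l a hl haL, msb_eq l a₀ hl ha₀, msb_eq l a₁ hl ha₁, ← hMdef]
  have hma : (M ≤ a) ↔ m = 1 := by rw [hm]; split <;> rename_i h <;> simp [h]
  have hma₀ : (M ≤ a₀) ↔ m₀ = 1 := by rw [hm₀]; split <;> rename_i h <;> simp [h]
  have hma₁ : (M ≤ a₁) ↔ m₁ = 1 := by rw [hm₁]; split <;> rename_i h <;> simp [h]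
  rw [decide_eq_decide.mpr hma, decide_eq_decide.mpr hma₀, decide_eq_decide.mpr hma₁]
  have hm01 : m = 0 ∨ m = 1 := by rw [hm]; split <;> simp
  have hm₀01 : m₀ = 0 ∨ m₀ = 1 := by rw [hm₀]; split <;> simp
  have hm₁01 : m₁ = 0 ∨ m₁ = 1 := by rw [hm₁]; split <;> simp
  rcases hm01 with h1 | h1 <;> rcases hm₀01 with h2 | h2 <;> rcases hm₁01 with h3 | h3 <;>
    simp only [h1, h2, h3, Int.odd_iff, Nat.cast_zero, Nat.cast_one]
  all_goals first
    | exact inferInstance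
    | (norm_num; omega)
    | norm_num
end

section
/- Let l ≥ 1 be a natural number and let x, r be natural numbers with x < 2^l and r < 2^l. For each j with 0 ≤ j < l define the integer c_j = 1 − (x_j − r_j) + Σ_{k=j+1}^{l−1} (x_k XOR r_k), where x_k, r_k ∈ {0,1} denote the k-th binary digits of x and r (bit l−1 being the most significant). Then x > r if and only if there exists j with 0 ≤ j < l and c_j = 0. Moreover, every c_j satisfies 0 ≤ c_j ≤ l + 1. -/
/-- Correctness of the bitwise comparison underlying Algorithm 5
(Equation 11): `x > r` exactly when some
`c_j = 1 - (x_j - r_j) + Σ_{k=j+1}^{l-1} (x_k ⊕ r_k)` vanishes, and each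
`c_j` lies between `0` and `l + 1`. -/
theorem bitwise_comparison_correct
    (l x r : ℕ) (hl : 1 ≤ l) (hx : x < 2 ^ l) (hr : r < 2 ^ l)
    (c : ℕ → ℤ)
    (hc : ∀ j < l,
      c j = 1 - ((if Nat.testBit x j then (1 : ℤ) else 0) -
                 (if Nat.testBit r j then (1 : ℤ) else 0)) +
            ∑ k ∈ Finset.Ico (j + 1) l,
              (if Nat.testBit x k ≠ Nat.testBit r k then (1 : ℤ) else 0)) :
    (x > r ↔ ∃ j < l, c j = 0) ∧ ∀ j < l, 0 ≤ c j ∧ c j ≤ l + 1 := by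
  have hterm_nonneg : ∀ j : ℕ,
      (0 : ℤ) ≤ 1 - ((if Nat.testBit x j then (1 : ℤ) else 0) -
        (if Nat.testBit r j then (1 : ℤ) else 0)) := by
    intro j; split <;> split <;> norm_num
  have hsum_nonneg : ∀ j : ℕ, (0 : ℤ) ≤
      ∑ k ∈ Finset.Ico (j + 1) l,
        (if Nat.testBit x k ≠ Nat.testBit r k then (1 : ℤ) else 0) := by
    intro j
    apply Finset.sum_nonneg
    intro k _; split <;> norm_num
  constructor
  · constructor
    · intro hgt
      have hne : x ^^^ r ≠ 0 := by
        intro h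
        have : x = r := by
          have := by simpa [Nat.xor_assoc, Nat.xor_self, Nat.xor_zero, Nat.zero_xor] using congrArg (· ^^^ r) h
          exact this
        omega
      obtain ⟨i, hi, hi'⟩ := Nat.exists_most_significant_bit hne
      rw [Nat.testBit_xor, bne_iff_ne] at hi
      have hil : i < l := by
        by_contra h
        push_neg at h
        have h1 : Nat.testBit x i = false :=
          Nat.testBit_eq_false_of_lt (lt_of_lt_of_le hx (Nat.pow_le_pow_right (by norm_num) h))
        have h2 : Nat.testBit r i = false :=
          Nat.testBit_eq_false_of_lt (lt_of_lt_of_le hr (Nat.pow_le_pow_right (by norm_num) h))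
        exact hi (h1.trans h2.symm)
      have heqhigh : ∀ k, i < k → Nat.testBit x k = Nat.testBit r k := by
        intro k hk
        have := hi' k hk
        rw [Nat.testBit_xor] at this
        simpa using this
      have hxi : Nat.testBit x i = true ∧ Nat.testBit r i = false := by
        rcases Bool.eq_false_or_eq_true (Nat.testBit x i) with h | h
        · refine ⟨h, ?_⟩
          rcases Bool.eq_false_or_eq_true (Nat.testBit r i) with h' | h'
          · exact absurd (h.trans h'.symm) hi
          · exact h'
        · have hri : Nat.testBit r i = true := by
            rcases Bool.eq_false_or_eq_true (Nat.testBit r i) with h' | h'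
            · exact h'
            · exact absurd (h.trans h'.symm) hi
          have : x < r := Nat.lt_of_testBit i h hri heqhigh
          omega
      refine ⟨i, hil, ?_⟩
      have hz : ∑ k ∈ Finset.Ico (i + 1) l,
          (if Nat.testBit x k ≠ Nat.testBit r k then (1 : ℤ) else 0) = 0 := by
        apply Finset.sum_eq_zero
        intro k hk
        rw [Finset.mem_Ico] at hk
        rw [if_neg]
        push_neg
        exact heqhigh k (by omega)
      rw [hc i hil, hxi.1, hxi.2, hz]
      norm_num
    · rintro ⟨j, hjl, hcj⟩
      rw [hc j hjl] at hcj
      have h1 := hterm_nonneg j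
      have h2 := hsum_nonneg j
      have hA : 1 - ((if Nat.testBit x j then (1 : ℤ) else 0) -
          (if Nat.testBit r j then (1 : ℤ) else 0)) = 0 := by omega
      have hB : ∑ k ∈ Finset.Ico (j + 1) l,
          (if Nat.testBit x k ≠ Nat.testBit r k then (1 : ℤ) else 0) = 0 := by omega
      have hxj : Nat.testBit x j = true ∧ Nat.testBit r j = false := by
        revert hA
        rcases Bool.eq_false_or_eq_true (Nat.testBit x j) with h | h <;>
          rcases Bool.eq_false_or_eq_true (Nat.testBit r j) with h' | h' <;>
          simp [h, h']
      have heq : ∀ k, j < k → Nat.testBit r k = Nat.testBit x k := by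
        intro k hk
        by_cases hkl : k < l
        · have := (Finset.sum_eq_zero_iff_of_nonneg (fun k _ => by split <;> norm_num)).mp hB
            k (Finset.mem_Ico.mpr ⟨by omega, hkl⟩)
          by_contra hne
          rw [if_pos (Ne.symm hne)] at this
          norm_num at this
        · push_neg at hkl
          have h1 : Nat.testBit x k = false :=
            Nat.testBit_eq_false_of_lt (lt_of_lt_of_le hx (Nat.pow_le_pow_right (by norm_num) hkl))
          have h2 : Nat.testBit r k = false :=
            Nat.testBit_eq_false_of_lt (lt_of_lt_of_le hr (Nat.pow_le_pow_right (by norm_num) hkl))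
          rw [h1, h2]
      exact Nat.lt_of_testBit j hxj.2 hxj.1 heq
  · intro j hjl
    rw [hc j hjl]
    constructor
    · have := hterm_nonneg j
      have := hsum_nonneg j
      omega
    · have hA : 1 - ((if Nat.testBit x j then (1 : ℤ) else 0) -
          (if Nat.testBit r j then (1 : ℤ) else 0)) ≤ 2 := by
        split <;> split <;> norm_num
      have hB : ∑ k ∈ Finset.Ico (j + 1) l,
          (if Nat.testBit x k ≠ Nat.testBit r k then (1 : ℤ) else 0) ≤ l - 1 := by
        calc _ ≤ ∑ k ∈ Finset.Ico (j + 1) l, (1 : ℤ) := by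
              apply Finset.sum_le_sum
              intro k _; split <;> norm_num
          _ = (l - (j + 1) : ℕ) := by simp [Nat.card_Ico]
          _ ≤ (l : ℤ) - 1 := by
              have : l - (j + 1) ≤ l - 1 := by omega
              omega
      omega
end

section
/- Let l ≥ 1 be a natural number, let p be a prime with p > l + 1, and let x, r be natural numbers with x < 2^l and r < 2^l. For each j with 0 ≤ j < l define c_j = 1 − (x_j − r_j) + Σ_{k=j+1}^{l−1} (x_k XOR r_k) as an integer, where x_k, r_k ∈ {0,1} are the k-th binary digits of x and r (bit l−1 most significant). Then x > r if and only if there exists j with 0 ≤ j < l such that the image of c_j in ZMod p is zero. -/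
/-- Correctness of the zero-check over `Z_p` in Algorithm 5: since each
`c_j = 1 - (x_j - r_j) + Σ_{k=j+1}^{l-1} (x_k ⊕ r_k)` lies between `0` and
`l + 1`, for a prime `p > l + 1` vanishing modulo `p` coincides with
vanishing over the integers, so `x > r` iff some `c_j` is zero in `ZMod p`. -/
theorem bitwise_comparison_mod_p_correct
    (l p x r : ℕ) (hl : 1 ≤ l) (hp : p.Prime) (hpl : l + 1 < p)
    (hx : x < 2 ^ l) (hr : r < 2 ^ l)
    (c : ℕ → ℤ)
    (hc : ∀ j < l,
      c j = 1 - ((if Nat.testBit x j then (1 : ℤ) else 0) -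
                 (if Nat.testBit r j then (1 : ℤ) else 0)) +
            ∑ k ∈ Finset.Ico (j + 1) l,
              (if Nat.testBit x k ≠ Nat.testBit r k then (1 : ℤ) else 0)) :
    x > r ↔ ∃ j < l, ((c j : ℤ) : ZMod p) = 0 := by
  have hsum_nonneg : ∀ j, (0:ℤ) ≤ ∑ k ∈ Finset.Ico (j + 1) l,
      (if Nat.testBit x k ≠ Nat.testBit r k then (1 : ℤ) else 0) := by
    intro j
    apply Finset.sum_nonneg
    intro k _; split <;> norm_num
  have hsum_le : ∀ j, (∑ k ∈ Finset.Ico (j + 1) l,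
      (if Nat.testBit x k ≠ Nat.testBit r k then (1 : ℤ) else 0)) ≤ (l:ℤ) - 1 := by
    intro j
    calc (∑ k ∈ Finset.Ico (j + 1) l,
        (if Nat.testBit x k ≠ Nat.testBit r k then (1 : ℤ) else 0))
        ≤ ∑ k ∈ Finset.Ico (j + 1) l, (1:ℤ) := by
          apply Finset.sum_le_sum; intro k _; split <;> norm_num
      _ = ((Finset.Ico (j + 1) l).card : ℤ) := by simp
      _ ≤ (l:ℤ) - 1 := by rw [Nat.card_Ico]; omega
  have hbound : ∀ j < l, 0 ≤ c j ∧ c j < p := by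
    intro j hj
    rw [hc j hj]
    set S := ∑ k ∈ Finset.Ico (j + 1) l,
      (if Nat.testBit x k ≠ Nat.testBit r k then (1 : ℤ) else 0) with hS
    have h1 : (0:ℤ) ≤ S := hsum_nonneg j
    have h2 : S ≤ (l:ℤ) - 1 := hsum_le j
    have h3 : (l:ℤ) + 1 < p := by exact_mod_cast hpl
    refine ⟨?_, ?_⟩ <;> split_ifs <;> linarith
  have hzero : ∀ j < l, (((c j : ℤ) : ZMod p) = 0 ↔ c j = 0) := by
    intro j hj
    rw [ZMod.intCast_zmod_eq_zero_iff_dvd]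
    constructor
    · intro hdvd
      obtain ⟨hb1, hb2⟩ := hbound j hj
      have h1 : c j % p = 0 := Int.emod_eq_zero_of_dvd hdvd
      have h2 : c j % p = c j := Int.emod_eq_of_lt hb1 hb2
      omega
    · intro h; rw [h]; exact dvd_zero _
  have hcz : ∀ j < l, (c j = 0 ↔ Nat.testBit x j = true ∧ Nat.testBit r j = false ∧
      ∀ k, j < k → k < l → Nat.testBit x k = Nat.testBit r k) := by
    intro j hj
    rw [hc j hj]
    set S := ∑ k ∈ Finset.Ico (j + 1) l,
      (if Nat.testBit x k ≠ Nat.testBit r k then (1 : ℤ) else 0) with hS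
    have h1 : (0:ℤ) ≤ S := hsum_nonneg j
    constructor
    · intro h
      cases hxb : x.testBit j with
      | false =>
        exfalso
        cases hrb : r.testBit j with
        | false => rw [hxb, hrb] at h; norm_num at h; linarith
        | true => rw [hxb, hrb] at h; norm_num at h; linarith
      | true =>
        cases hrb : r.testBit j with
        | true => exfalso; rw [hxb, hrb] at h; norm_num at h; linarith
        | false =>
          have hSz : S = 0 := by rw [hxb, hrb] at h; norm_num at h; linarith
          refine ⟨rfl, rfl, ?_⟩
          rw [hS] at hSz
          intro k hk1 hk2
          have hk : k ∈ Finset.Ico (j+1) l := by simp only [Finset.mem_Ico]; omega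
          have h0 := (Finset.sum_eq_zero_iff_of_nonneg
            (fun i _ => by split <;> norm_num)).mp hSz k hk
          by_contra hne
          simp [hne] at h0
    · rintro ⟨hb1, hb2, h3⟩
      have hSz : S = 0 := by
        rw [hS]
        apply Finset.sum_eq_zero
        intro k hk
        simp only [Finset.mem_Ico] at hk
        simp [h3 k (by omega) hk.2]
      rw [hb1, hb2, hSz]; norm_num
  constructor
  · intro hgt
    have hne : x ^^^ r ≠ 0 := by
      intro h
      have : x = r := xor_eq_zero_iff.mp h
      omega
    obtain ⟨i, hi, hi'⟩ := Nat.exists_most_significant_bit hne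
    have hxor : ∀ k, (x ^^^ r).testBit k = (x.testBit k != r.testBit k) := by
      intro k; simp [Nat.testBit_xor]
    have hil : i < l := by
      by_contra hge
      push_neg at hge
      have hx' : x.testBit i = false :=
        Nat.testBit_lt_two_pow (lt_of_lt_of_le hx (Nat.pow_le_pow_right (by norm_num) hge))
      have hr' : r.testBit i = false :=
        Nat.testBit_lt_two_pow (lt_of_lt_of_le hr (Nat.pow_le_pow_right (by norm_num) hge))
      rw [hxor, hx', hr'] at hi
      simp at hi
    have hhigher : ∀ k, i < k → x.testBit k = r.testBit k := by
      intro k hk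
      have h0 := hi' k hk
      rw [hxor] at h0
      cases hb : x.testBit k <;> cases hb' : r.testBit k <;>
        simp [hb, hb'] at h0 ⊢
    have hxi : x.testBit i = true ∧ r.testBit i = false := by
      rw [hxor] at hi
      cases hb : x.testBit i <;> cases hb' : r.testBit i <;>
        simp [hb, hb'] at hi ⊢
      exact absurd (Nat.lt_of_testBit i hb hb' (fun k hk => hhigher k hk)) (by omega)
    exact ⟨i, hil, (hzero i hil).mpr ((hcz i hil).mpr
      ⟨hxi.1, hxi.2, fun k hk _ => hhigher k hk⟩)⟩
  · rintro ⟨j, hj, hz⟩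
    obtain ⟨h1, h2, h3⟩ := (hcz j hj).mp ((hzero j hj).mp hz)
    exact Nat.lt_of_testBit j h2 h1 (by
      intro k hk
      by_cases hkl : k < l
      · exact (h3 k hk hkl).symm
      · push_neg at hkl
        rw [Nat.testBit_lt_two_pow (lt_of_lt_of_le hr (Nat.pow_le_pow_right (by norm_num) hkl)),
            Nat.testBit_lt_two_pow (lt_of_lt_of_le hx (Nat.pow_le_pow_right (by norm_num) hkl))])
end

section
/- Let p be a prime, let l be an even natural number, let c₀, c₁ : Fin l → ZMod p, let σ be a permutation of Fin (l/2), let N ∈ ZMod p with N ≠ 0, and let M : Fin (l/2) → ZMod p with M j ≠ 0 for all j. For j : Fin (l/2) define d j = (c₀ j + c₁ j) · (c₀ (j + l/2) + c₁ (j + l/2)). Then (there exists j : Fin (l/2) with N · M (σ j) · d (σ j) = 0) if and only if (there exists j < l with c₀ j + c₁ j = 0). -/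
/-- End-to-end correctness of Algorithm 4 (CheckZero): pairwise multiplying
the reconstructed values, masking by nonzero field elements `N` and `M j`,
and shuffling by a permutation `σ` yields a zero among the final masked
values exactly when some original shared value `c₀ j + c₁ j` is zero. -/
theorem checkZero_correct
    (p l : ℕ) (hp : p.Prime) (hl : Even l)
    (c₀ c₁ : ℕ → ZMod p) (σ : Equiv.Perm (Fin (l / 2)))
    (N : ZMod p) (hN : N ≠ 0)
    (M : Fin (l / 2) → ZMod p) (hM : ∀ j, M j ≠ 0)
    (d : Fin (l / 2) → ZMod p)
    (hd : ∀ j : Fin (l / 2),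
      d j = (c₀ (j : ℕ) + c₁ (j : ℕ)) *
            (c₀ ((j : ℕ) + l / 2) + c₁ ((j : ℕ) + l / 2))) :
    (∃ j : Fin (l / 2), N * M (σ j) * d (σ j) = 0) ↔
      ∃ j < l, c₀ j + c₁ j = 0 := by
  haveI := Fact.mk hp
  have hll : l / 2 + l / 2 = l := by
    obtain ⟨k, hk⟩ := hl; omega
  constructor
  · rintro ⟨j, hj⟩
    rw [hd] at hj
    rcases mul_eq_zero.1 hj with h | h
    · exact absurd (mul_eq_zero.1 h) (by simp [hN, hM])
    · rcases mul_eq_zero.1 h with h | h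
      · exact ⟨(σ j : ℕ), by have := (σ j).isLt; omega, h⟩
      · exact ⟨(σ j : ℕ) + l / 2, by have := (σ j).isLt; omega, h⟩
  · rintro ⟨j, hjl, hj⟩
    have h2 : 0 < l / 2 := by omega
    by_cases hcase : j < l / 2
    · refine ⟨σ.symm ⟨j, hcase⟩, ?_⟩
      rw [hd]
      simp [hj]
    · refine ⟨σ.symm ⟨j - l / 2, by omega⟩, ?_⟩
      rw [hd]
      have : j - l / 2 + l / 2 = j := by omega
      simp [this, hj]
end

section
/- Let a, c be real numbers with 1/2 ≤ c ≤ 1, and define w₀ = 2.9142 − 2c, ε₀ = 1 − c·w₀, ε₁ = ε₀², ε₂ = ε₁². Then a·w₀·(1 + ε₀)·(1 + ε₁)·(1 + ε₂) = (a/c)·(1 − ε₀⁸), and hence |a·w₀·(1 + ε₀)·(1 + ε₁)·(1 + ε₂) − a/c| ≤ |a/c| · 0.0858⁸. -/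
/-- Correctness of the iterative refinement in Algorithm 8 (Secret Sharing
Division): with `w₀ = 2.9142 - 2c`, `ε₀ = 1 - c·w₀`, `ε₁ = ε₀²`, `ε₂ = ε₁²`,
the output `a·w₀·(1+ε₀)(1+ε₁)(1+ε₂)` equals `(a/c)·(1 - ε₀⁸)`, so the error
is at most `|a/c| · 0.0858⁸`. -/
theorem division_refinement_correct
    (a c : ℝ) (hc₁ : 1 / 2 ≤ c) (hc₂ : c ≤ 1)
    (w₀ ε₀ ε₁ ε₂ : ℝ)
    (hw₀ : w₀ = 2.9142 - 2 * c) (hε₀ : ε₀ = 1 - c * w₀)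
    (hε₁ : ε₁ = ε₀ ^ 2) (hε₂ : ε₂ = ε₁ ^ 2) :
    a * w₀ * (1 + ε₀) * (1 + ε₁) * (1 + ε₂) = (a / c) * (1 - ε₀ ^ 8) ∧
      |a * w₀ * (1 + ε₀) * (1 + ε₁) * (1 + ε₂) - a / c| ≤ |a / c| * 0.0858 ^ 8 := by
  have hc0 : c ≠ 0 := by linarith
  have heq : a * w₀ * (1 + ε₀) * (1 + ε₁) * (1 + ε₂) = (a / c) * (1 - ε₀ ^ 8) := by
    subst hε₂ hε₁
    have hcw : c * w₀ = 1 - ε₀ := by linarith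
    field_simp
    linear_combination a * (1 + ε₀) * (1 + ε₀ ^ 2) * (1 + (ε₀ ^ 2) ^ 2) * hcw
  refine ⟨heq, ?_⟩
  have hεb : |ε₀| ≤ 0.0858 := by
    rw [abs_le]
    constructor <;> nlinarith [hε₀, hw₀, sq_nonneg (c - 0.72855)]
  have : a * w₀ * (1 + ε₀) * (1 + ε₁) * (1 + ε₂) - a / c = -(a / c * ε₀ ^ 8) := by
    rw [heq]; ring
  rw [this, abs_neg, abs_mul, abs_pow]
  exact mul_le_mul_of_nonneg_left (pow_le_pow_left₀ (abs_nonneg _) hεb 8) (abs_nonneg _)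
end
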